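/- arXiv:1511.09168 — 6 statements merged into one kernel-verified Lean document; each statement's English description precedes it below -/
import Mathlib

section
/- For any x ∈ B(m), the cardinalities of the sets A_x and B_x are equal, where A_x = {(i,a,k) : i ∈ ℤ_L, a ∈ [1,n], 1 ≤ k ≤ (x^a_{i+1} - x^{a-1}_i)_+} and B_x = {(i,a,k) : i ∈ ℤ_L, a ∈ [1,n], 1 ≤ k ≤ (x^a_i - x^{a+1}_{i+1})_+}, with the convention x^0_i = x^{n+1}_i = 0. -/
open Finset

lemma count_set (n : ℕ) {L : ℕ} [NeZero L] (G : Fin L → ℕ → ℤ) :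
    {p : Fin L × ℕ × ℕ | 1 ≤ p.2.1 ∧ p.2.1 ≤ n ∧ 1 ≤ p.2.2 ∧
      (p.2.2 : ℤ) ≤ max (G p.1 p.2.1) 0}.ncard
    = ∑ i : Fin L, ∑ a ∈ Icc 1 n, (max (G i a) 0).toNat := by
  classical
  set F : Finset (Fin L × ℕ × ℕ) :=
    Finset.univ.biUnion (fun i => (Icc 1 n).biUnion
      (fun a => (Icc 1 (max (G i a) 0).toNat).image fun k => (i, a, k))) with hF
  have hmem : ∀ p : Fin L × ℕ × ℕ, p ∈ F ↔
      (1 ≤ p.2.1 ∧ p.2.1 ≤ n ∧ 1 ≤ p.2.2 ∧ (p.2.2 : ℤ) ≤ max (G p.1 p.2.1) 0) := by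
    rintro ⟨i, a, k⟩
    simp only [hF, mem_biUnion, mem_univ, true_and, mem_image, mem_Icc, Prod.mk.injEq]
    constructor
    · rintro ⟨i', a', ⟨h1, h2⟩, k', ⟨hk1, hk2⟩, rfl, rfl, rfl⟩
      exact ⟨h1, h2, hk1, (Int.le_toNat (le_max_right _ _)).mp hk2⟩
    · rintro ⟨h1, h2, hk1, hk2⟩
      exact ⟨i, a, ⟨h1, h2⟩, k, ⟨hk1, (Int.le_toNat (le_max_right _ _)).mpr hk2⟩,
        rfl, rfl, rfl⟩
  have hset : {p : Fin L × ℕ × ℕ | 1 ≤ p.2.1 ∧ p.2.1 ≤ n ∧ 1 ≤ p.2.2 ∧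
      (p.2.2 : ℤ) ≤ max (G p.1 p.2.1) 0} = ↑F := by
    ext p; simp [hmem p]
  rw [hset, Set.ncard_coe_finset, hF]
  rw [Finset.card_biUnion]
  · refine Finset.sum_congr rfl fun i _ => ?_
    rw [Finset.card_biUnion]
    · refine Finset.sum_congr rfl fun a _ => ?_
      rw [Finset.card_image_of_injective _ (fun k k' h => by simpa using h), Nat.card_Icc]
      simp
    · intro a _ b _ hab
      simp only [Finset.disjoint_left, mem_image]
      rintro p ⟨k, _, rfl⟩ ⟨k', _, h⟩
      simp only [Prod.mk.injEq] at h
      exact hab h.2.1.symm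
  · intro i _ j _ hij
    simp only [Finset.disjoint_left, mem_biUnion, mem_image]
    rintro p ⟨a, _, k, _, rfl⟩ ⟨a', _, k', _, h⟩
    simp only [Prod.mk.injEq] at h
    exact hij h.1.symm

lemma cyclic_sum {L : ℕ} [NeZero L] (f : Fin L → ℤ) :
    ∑ i : Fin L, f (i + 1) = ∑ i : Fin L, f i :=
  Fintype.sum_equiv (Equiv.addRight (1 : Fin L)) _ _ (fun i => rfl)

/-- For an n-line state x = (x^a_i), a ∈ [1,n], i ∈ ℤ_L
(with conventions x^0 = x^{n+1} = 0), the sets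
A_x = {(i,a,k) : 1 ≤ a ≤ n, 1 ≤ k ≤ (x^a_{i+1} - x^{a-1}_i)₊} and
B_x = {(i,a,k) : 1 ≤ a ≤ n, 1 ≤ k ≤ (x^a_i - x^{a+1}_{i+1})₊}
have the same cardinality. -/
theorem card_A_eq_card_B (n L : ℕ) [NeZero L]
    (x : ℕ → Fin L → ℕ)
    (h0 : ∀ i, x 0 i = 0) (htop : ∀ i, x (n + 1) i = 0) :
    Set.ncard {p : Fin L × ℕ × ℕ |
        1 ≤ p.2.1 ∧ p.2.1 ≤ n ∧ 1 ≤ p.2.2 ∧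
        (p.2.2 : ℤ) ≤ max ((x p.2.1 (p.1 + 1) : ℤ) - (x (p.2.1 - 1) p.1 : ℤ)) 0}
      = Set.ncard {p : Fin L × ℕ × ℕ |
        1 ≤ p.2.1 ∧ p.2.1 ≤ n ∧ 1 ≤ p.2.2 ∧
        (p.2.2 : ℤ) ≤ max ((x p.2.1 p.1 : ℤ) - (x (p.2.1 + 1) (p.1 + 1) : ℤ)) 0} := by
  classical
  rw [count_set n (fun i a => (x a (i + 1) : ℤ) - (x (a - 1) i : ℤ)),
      count_set n (fun i a => (x a i : ℤ) - (x (a + 1) (i + 1) : ℤ))]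
  apply @Nat.cast_injective ℤ _ _
  push_cast [Int.toNat_of_nonneg (le_max_right _ _)]
  -- now an identity in ℤ
  -- abbreviations
  set P : ℕ → ℤ := fun j => ∑ i : Fin L, max ((x (j+1) (i+1) : ℤ) - (x j i : ℤ)) 0 with hP
  set N : ℕ → ℤ := fun j => ∑ i : Fin L, max ((x j i : ℤ) - (x (j+1) (i+1) : ℤ)) 0 with hN
  set S : ℕ → ℤ := fun a => ∑ i : Fin L, (x a i : ℤ) with hS
  have hL : (∑ i : Fin L, ∑ a ∈ Icc 1 n, max ((x a (i+1) : ℤ) - (x (a-1) i : ℤ)) 0)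
      = ∑ j ∈ range n, P j := by
    rw [Finset.sum_comm]
    rw [← Finset.Ico_add_one_right_eq_Icc, Finset.sum_Ico_eq_sum_range]
    refine Finset.sum_congr (by simp) fun j _ => ?_
    simp [hP, Nat.add_sub_cancel_left, Nat.add_comm 1 j]
  have hR : (∑ i : Fin L, ∑ a ∈ Icc 1 n, max ((x a i : ℤ) - (x (a+1) (i+1) : ℤ)) 0)
      = ∑ j ∈ range n, N (j + 1) := by
    rw [Finset.sum_comm]
    rw [← Finset.Ico_add_one_right_eq_Icc, Finset.sum_Ico_eq_sum_range]
    refine Finset.sum_congr (by simp) fun j _ => ?_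
    simp [hN, Nat.add_comm 1 j]
  rw [hL, hR]
  have key : ∀ j, P j - N j = S (j+1) - S j := by
    intro j
    have : P j - N j = ∑ i : Fin L, ((x (j+1) (i+1) : ℤ) - (x j i : ℤ)) := by
      rw [hP, hN, ← Finset.sum_sub_distrib]
      refine Finset.sum_congr rfl fun i _ => ?_
      have := max_zero_sub_max_neg_zero_eq_self ((x (j+1) (i+1) : ℤ) - (x j i : ℤ))
      rw [neg_sub] at this
      linarith [this]
    rw [this, Finset.sum_sub_distrib, hS]
    congr 1
    exact cyclic_sum (fun i => (x (j+1) i : ℤ))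
  have hshift : ∑ j ∈ range n, N (j + 1) = ∑ j ∈ range n, N j + N n - N 0 := by
    have h1 := Finset.sum_range_succ' N n
    have h2 := Finset.sum_range_succ N n
    linarith
  have hN0 : N 0 = 0 := by
    rw [hN]
    refine Finset.sum_eq_zero fun i _ => ?_
    simp [h0]
  have hNn : N n = S n := by
    rw [hN, hS]
    refine Finset.sum_congr rfl fun i _ => ?_
    simp [htop]
  have hS0 : S 0 = 0 := by
    rw [hS]; exact Finset.sum_eq_zero fun i _ => by simp [h0]
  have htel : ∑ j ∈ range n, (S (j+1) - S j) = S n - S 0 := Finset.sum_range_sub S n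
  have hsum : ∑ j ∈ range n, P j - ∑ j ∈ range n, N j = S n - S 0 := by
    rw [← Finset.sum_sub_distrib]
    rw [← htel]
    exact Finset.sum_congr rfl fun j _ => key j
  rw [hshift]
  linarith [hsum]
end

section
/- The map T : A → B defined in the paper is well-defined: given (x,(i,a,k)) ∈ A (so 1 ≤ k ≤ x^a_{i+1} - x^{a-1}_i), letting c ∈ [a,n] be the unique index such that x^{b-1}_i < x^b_{i+1} for all a ≤ b ≤ c and x^c_i ≥ x^{c+1}_{i+1}, the output (i,c,l), y with y defined by y^b_i = x^b_i + x^b_{i+1} - x^{b-1}_i, y^b_{i+1} = x^{b-1}_i for b ∈ [a+1,c], y^a_i = x^a_i + k, y^a_{i+1} = x^a_{i+1} - k, and l = k if c = a, l = x^c_{i+1} - x^{c-1}_i if c > a, satisfies: all entries of y are nonnegative, each row sum of y equals the corresponding row sum of x, and 1 ≤ l ≤ y^c_i - y^{c+1}_{i+1} (i.e., (i,c,l) ∈ B_y). -/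
/-- Well-definedness of the map T. Given an n-line state x
(conventions x^0 = x^{n+1} = 0), data (i,a,k) ∈ A_x (so 1 ≤ k and
k + x^{a-1}_i ≤ x^a_{i+1}), and the index c ∈ [a,n] with x^{b-1}_i < x^b_{i+1}
for a ≤ b ≤ c and x^c_i ≥ x^{c+1}_{i+1}, the output state y (defined over ℤ
by the formulas of the paper) has nonnegative entries, the same row sums as x,
and the output label l satisfies 1 ≤ l ≤ y^c_i - y^{c+1}_{i+1}, i.e.
(i,c,l) ∈ B_y. -/
theorem T_well_defined (n L : ℕ) [NeZero L] (hL : 2 ≤ L)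
    (x : ℕ → Fin L → ℕ)
    (h0 : ∀ i, x 0 i = 0) (htop : ∀ i, x (n + 1) i = 0)
    (i : Fin L) (a k c : ℕ) (ha1 : 1 ≤ a) (han : a ≤ n)
    (hk1 : 1 ≤ k) (hk2 : k + x (a - 1) i ≤ x a (i + 1))
    (hac : a ≤ c) (hcn : c ≤ n)
    (hlt : ∀ b, a ≤ b → b ≤ c → x (b - 1) i < x b (i + 1))
    (hge : x (c + 1) (i + 1) ≤ x c i)
    (y : ℕ → Fin L → ℤ)
    (hy : ∀ b j, y b j =
      if b = a ∧ j = i then (x a i : ℤ) + k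
      else if b = a ∧ j = i + 1 then (x a (i + 1) : ℤ) - k
      else if (a + 1 ≤ b ∧ b ≤ c) ∧ j = i then
        (x b i : ℤ) + (x b (i + 1) : ℤ) - (x (b - 1) i : ℤ)
      else if (a + 1 ≤ b ∧ b ≤ c) ∧ j = i + 1 then (x (b - 1) i : ℤ)
      else (x b j : ℤ))
    (l : ℤ)
    (hl : l = if c = a then (k : ℤ) else (x c (i + 1) : ℤ) - (x (c - 1) i : ℤ)) :
    (∀ b j, 0 ≤ y b j) ∧
    (∀ b, ∑ j, y b j = ∑ j, (x b j : ℤ)) ∧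
    (1 ≤ l ∧ l ≤ y c i - y (c + 1) (i + 1)) := by
  have hii : (i + 1 : Fin L) ≠ i := by
    intro h
    have h' : L = 1 := by simpa [Fin.ext_iff, Fin.val_add] using h
    omega
  have hii' : i ≠ i + 1 := fun h => hii h.symm
  refine ⟨?_, ?_, ?_, ?_⟩
  · -- nonnegativity
    intro b j
    rw [hy]
    split_ifs with h1 h2 h3 h4
    · omega
    · omega
    · obtain ⟨⟨hb1, hb2⟩, _⟩ := h3
      have := hlt b (by omega) hb2
      omega
    · omega
    · omega
  · -- row sums
    intro b
    have hzero : ∑ j, (y b j - (x b j : ℤ)) = 0 := by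
      have hrest : ∀ j ∈ Finset.univ, j ∉ ({i, i + 1} : Finset (Fin L)) →
          y b j - (x b j : ℤ) = 0 := by
        intro j _ hj
        simp only [Finset.mem_insert, Finset.mem_singleton, not_or] at hj
        rw [hy]
        simp [hj.1, hj.2]
      rw [← Finset.sum_subset (Finset.subset_univ ({i, i + 1} : Finset (Fin L))) hrest,
        Finset.sum_pair hii']
      rw [hy, hy]
      by_cases hba : b = a
      · subst hba
        simp only [hii, and_true, and_false, if_true, if_false, true_and]
        simp
        try ring
      · by_cases hbc : a + 1 ≤ b ∧ b ≤ c
        · simp only [hba, false_and, if_false, hbc, true_and, hii, and_false]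
          simp
          ring
        · simp only [hba, hbc, false_and, if_false]
          ring
    have h2 : ∑ j, y b j - ∑ j, (x b j : ℤ) = 0 := by
      rw [← Finset.sum_sub_distrib]; exact hzero
    linarith
  · -- 1 ≤ l
    rw [hl]; split_ifs with hca
    · omega
    · have := hlt c hac (le_refl c); omega
  · -- l ≤ y c i - y (c+1) (i+1)
    have hyc1 : y (c + 1) (i + 1) = (x (c + 1) (i + 1) : ℤ) := by
      have h1 : c + 1 ≠ a := by omega
      have h2 : ¬ (c + 1 ≤ c) := by omega
      rw [hy]; simp [h1, h2]
    by_cases hca : c = a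
    · subst hca
      rw [hl, hy, hyc1]
      simp [hii]
      omega
    · rw [hl, hy, hyc1]
      have hcond : a + 1 ≤ c ∧ c ≤ c := ⟨by omega, le_refl c⟩
      simp [hca, hcond, hii]
      omega
end

section
/- The maps T : A → B and S : B → A defined in the paper are mutually inverse bijections: S ∘ T = id_A and T ∘ S = id_B. -/
/-- The graph of the map T of the paper:
`Trel n x i a k c l y` means T(x,(i,a,k)) = ((i,c,l),y), including the
conditions (i,a,k) ∈ A_x and the defining property of c ∈ [a,n]. -/
def Trel (n : ℕ) {L : ℕ} [NeZero L] (x : ℕ → Fin L → ℕ) (i : Fin L)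
    (a k c l : ℕ) (y : ℕ → Fin L → ℕ) : Prop :=
  1 ≤ a ∧ a ≤ n ∧ 1 ≤ k ∧ k + x (a - 1) i ≤ x a (i + 1) ∧
  a ≤ c ∧ c ≤ n ∧
  (∀ b, a ≤ b → b ≤ c → x (b - 1) i < x b (i + 1)) ∧
  x (c + 1) (i + 1) ≤ x c i ∧
  (∀ b j, y b j =
    if b = a ∧ j = i then x a i + k
    else if b = a ∧ j = i + 1 then x a (i + 1) - k
    else if (a + 1 ≤ b ∧ b ≤ c) ∧ j = i then x b i + x b (i + 1) - x (b - 1) i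
    else if (a + 1 ≤ b ∧ b ≤ c) ∧ j = i + 1 then x (b - 1) i
    else x b j) ∧
  l = (if c = a then k else x c (i + 1) - x (c - 1) i)

/-- The graph of the map S of the paper:
`Srel n x i a k d m y` means S((i,a,k),x) = (y,(i,d,m)), including the
conditions (i,a,k) ∈ B_x and the defining property of d ∈ [1,a]. -/
def Srel (n : ℕ) {L : ℕ} [NeZero L] (x : ℕ → Fin L → ℕ) (i : Fin L)
    (a k d m : ℕ) (y : ℕ → Fin L → ℕ) : Prop :=
  1 ≤ a ∧ a ≤ n ∧ 1 ≤ k ∧ k + x (a + 1) (i + 1) ≤ x a i ∧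
  1 ≤ d ∧ d ≤ a ∧
  (∀ b, d ≤ b → b ≤ a → x (b + 1) (i + 1) < x b i) ∧
  x (d - 1) i ≤ x d (i + 1) ∧
  (∀ b j, y b j =
    if b = a ∧ j = i then x a i - k
    else if b = a ∧ j = i + 1 then x a (i + 1) + k
    else if (d ≤ b ∧ b ≤ a - 1) ∧ j = i then x (b + 1) (i + 1)
    else if (d ≤ b ∧ b ≤ a - 1) ∧ j = i + 1 then x b i + x b (i + 1) - x (b + 1) (i + 1)
    else x b j) ∧
  m = (if d = a then k else x d i - x (d + 1) (i + 1))

/-- T : A → B and S : B → A are mutually inverse bijections: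
S ∘ T = id_A and T ∘ S = id_B.  Here this is expressed via the graphs of T
and S: if T maps (x,(i,a,k)) to ((i,c,l),y) then S maps ((i,c,l),y) back to
(x,(i,a,k)), and vice versa. -/
theorem T_S_mutually_inverse (n L : ℕ) [NeZero L] (hL : 2 ≤ L)
    (x y : ℕ → Fin L → ℕ)
    (h0 : ∀ i, x 0 i = 0) (htop : ∀ i, x (n + 1) i = 0)
    (i : Fin L) :
    (∀ a k c l, Trel n x i a k c l y → Srel n y i c l a k x) ∧
    (∀ a k d m, Srel n x i a k d m y → Trel n y i d m a k x) := by
  have hne : i ≠ i + 1 := by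
    have hv : (i + 1).val = (i.val + 1) % L := by
      rw [Fin.val_add, Fin.val_one', Nat.mod_eq_of_lt hL]
    intro h
    have h3 : i.val = (i.val + 1) % L := by rw [← hv, ← h]
    rcases Nat.lt_or_ge (i.val + 1) L with h4 | h4
    · rw [Nat.mod_eq_of_lt h4] at h3; omega
    · have h5 : i.val + 1 = L := by have := i.isLt; omega
      rw [h5, Nat.mod_self] at h3
      omega
  have hne' : i + 1 ≠ i := Ne.symm hne
  constructor
  · rintro a k c l ⟨ha1, han, hk1, hk, hac, hcn, hstrict, hcc, hy, hl⟩
    have hyi : ∀ b, y b i =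
        if b = a then x a i + k
        else if a + 1 ≤ b ∧ b ≤ c then x b i + x b (i + 1) - x (b - 1) i
        else x b i := by
      intro b
      rw [hy b i]
      simp [hne]
    have hyi1 : ∀ b, y b (i + 1) =
        if b = a then x a (i + 1) - k
        else if a + 1 ≤ b ∧ b ≤ c then x (b - 1) i
        else x b (i + 1) := by
      intro b
      rw [hy b (i + 1)]
      simp [hne']
    have Hc : x (c - 1) i < x c (i + 1) := hstrict c hac le_rfl
    have Ha : x (a - 1) i < x a (i + 1) := hstrict a le_rfl hac
    have hl' : (c = a ∧ l = k) ∨ (a + 1 ≤ c ∧ l + x (c - 1) i = x c (i + 1)) := by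
      by_cases h : c = a
      · exact Or.inl ⟨h, by rw [hl, if_pos h]⟩
      · refine Or.inr ⟨by omega, ?_⟩
        rw [hl, if_neg h]; omega
    refine ⟨by omega, hcn, by omega, ?_, ha1, hac, ?_, ?_, ?_, ?_⟩
    · -- l + y (c+1) (i+1) ≤ y c i
      rw [hyi1 (c + 1), hyi c]
      simp only [Nat.add_sub_cancel]
      split_ifs <;> subst_vars <;> omega
    · -- ∀ b, c-strictness for y
      intro b h1 h2
      have Hb : x (b - 1) i < x b (i + 1) := hstrict b h1 h2
      have H2 : b = c → x (b + 1) (i + 1) ≤ x b i := fun h => by rw [h]; exact hcc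
      rw [hyi1 (b + 1), hyi b]
      simp only [Nat.add_sub_cancel]
      split_ifs <;> subst_vars <;> omega
    · -- y (a-1) i ≤ y a (i+1)
      rw [hyi (a - 1), hyi1 a]
      split_ifs <;> omega
    · -- formula
      intro b j
      by_cases hj : j = i
      · rw [hj]
        have Hb : a ≤ b → b ≤ c → x (b - 1) i < x b (i + 1) := hstrict b
        simp only [hyi, hyi1, hne, hne', Nat.add_sub_cancel, eq_self_iff_true, and_true,
          and_false, if_false, if_true, ite_false, ite_true, true_and, false_and]
        split_ifs <;> subst_vars <;> omega
      · by_cases hj2 : j = i + 1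
        · rw [hj2]
          have Hb : a ≤ b → b ≤ c → x (b - 1) i < x b (i + 1) := hstrict b
          simp only [hyi, hyi1, hne, hne', Nat.add_sub_cancel, eq_self_iff_true, and_true,
            and_false, if_false, if_true, ite_false, ite_true, true_and, false_and]
          split_ifs <;> subst_vars <;> omega
        · rw [hy b j]
          simp [hj, hj2]
    · -- k = if a = c then l else y a i - y (a+1) (i+1)
      by_cases h : a = c
      · rw [if_pos h, hl, if_pos h.symm]
      · rw [if_neg h, hyi a, hyi1 (a + 1)]
        simp only [Nat.add_sub_cancel]
        split_ifs <;> omega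
  · rintro a k d m ⟨ha1, han, hk1, hk, hd1, hda, hstrict, hdd, hy, hm⟩
    have hyi : ∀ b, y b i =
        if b = a then x a i - k
        else if d ≤ b ∧ b ≤ a - 1 then x (b + 1) (i + 1)
        else x b i := by
      intro b
      rw [hy b i]
      simp [hne]
    have hyi1 : ∀ b, y b (i + 1) =
        if b = a then x a (i + 1) + k
        else if d ≤ b ∧ b ≤ a - 1 then x b i + x b (i + 1) - x (b + 1) (i + 1)
        else x b (i + 1) := by
      intro b
      rw [hy b (i + 1)]
      simp [hne']
    have Hd : x (d + 1) (i + 1) < x d i := hstrict d le_rfl hda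
    have Ha : x (a + 1) (i + 1) < x a i := hstrict a hda le_rfl
    have hm' : (d = a ∧ m = k) ∨ (d + 1 ≤ a ∧ m + x (d + 1) (i + 1) = x d i) := by
      by_cases h : d = a
      · exact Or.inl ⟨h, by rw [hm, if_pos h]⟩
      · refine Or.inr ⟨by omega, ?_⟩
        rw [hm, if_neg h]; omega
    refine ⟨hd1, by omega, by omega, ?_, hda, han, ?_, ?_, ?_, ?_⟩
    · -- m + y (d-1) i ≤ y d (i+1)
      have E : 1 ≤ d → x (d - 1 + 1) (i + 1) = x d (i + 1) := fun h => by
        rw [Nat.sub_add_cancel h]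
      rw [hyi (d - 1), hyi1 d]
      split_ifs <;> subst_vars <;> omega
    · -- ∀ b, d ≤ b → b ≤ a → y (b-1) i < y b (i+1)
      intro b h1 h2
      have Hb : x (b + 1) (i + 1) < x b i := hstrict b h1 h2
      have H2 : b = d → x (b - 1) i ≤ x b (i + 1) := fun h => by rw [h]; exact hdd
      have E : 1 ≤ b → x (b - 1 + 1) (i + 1) = x b (i + 1) := fun h => by
        rw [Nat.sub_add_cancel h]
      rw [hyi (b - 1), hyi1 b]
      split_ifs <;> subst_vars <;> omega
    · -- y (a+1) (i+1) ≤ y a i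
      rw [hyi1 (a + 1), hyi a]
      split_ifs <;> omega
    · -- formula
      intro b j
      by_cases hj : j = i
      · rw [hj]
        have Hb : d ≤ b → b ≤ a → x (b + 1) (i + 1) < x b i := hstrict b
        have E : 1 ≤ b → x (b - 1 + 1) (i + 1) = x b (i + 1) := fun h => by
          rw [Nat.sub_add_cancel h]
        simp only [hyi, hyi1, hne, hne', eq_self_iff_true, and_true,
          and_false, if_false, if_true, ite_false, ite_true, true_and, false_and]
        split_ifs <;> subst_vars <;> omega
      · by_cases hj2 : j = i + 1
        · rw [hj2]
          have Hb : d ≤ b → b ≤ a → x (b + 1) (i + 1) < x b i := hstrict b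
          have E : 1 ≤ b → x (b - 1 + 1) (i + 1) = x b (i + 1) := fun h => by
            rw [Nat.sub_add_cancel h]
          simp only [hyi, hyi1, hne, hne', eq_self_iff_true, and_true,
            and_false, if_false, if_true, ite_false, ite_true, true_and, false_and]
          split_ifs <;> subst_vars <;> omega
        · rw [hy b j]
          simp [hj, hj2]
    · -- k = if a = d then m else y a (i+1) - y (a-1) i
      by_cases h : a = d
      · rw [if_pos h, hm, if_pos h.symm]
      · rw [if_neg h, hyi1 a, hyi (a - 1)]
        have E : 1 ≤ a → x (a - 1 + 1) (i + 1) = x a (i + 1) := fun h => by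
          rw [Nat.sub_add_cancel h]
        split_ifs <;> omega
end

section
/- For a Markov process on a finite state space in which from state x there is a transition to T^k_{i,a}(x) at rate 1 for each (i,a,k) ∈ A_x, the uniform distribution is stationary; i.e., for every state x, the total inflow rate under the uniform measure equals the total outflow rate #A_x · μ. This follows from the existence of a bijection between {(y,(i,a,k)) : T^k_{i,a}(y) = x} and B_x, combined with #A_x = #B_x. -/
/-- For a Markov process on a finite state space V in which from
state y there is a transition to t y p at rate 1 for each p ∈ A y, the uniform
distribution is stationary: for every state x the total inflow
#{(y,p) : p ∈ A y, t y p = x} equals the total outflow #A_x.  This holds given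
a bijection e from ⊔_y {y} × A_y to ⊔_x B_x × {x} whose target state component
realizes the transition map, together with #A_x = #B_x for all x. -/
theorem uniform_stationary {V ι : Type*} [Fintype V] [DecidableEq V] [DecidableEq ι]
    (A B : V → Finset ι) (t : V → ι → V)
    (hcard : ∀ x, (A x).card = (B x).card)
    (e : ((y : V) × {p // p ∈ A y}) ≃ ((x : V) × {p // p ∈ B x}))
    (he : ∀ z : (y : V) × {p // p ∈ A y}, t z.1 z.2.1 = (e z).1) :
    ∀ x : V, ∑ y : V, ((A y).filter (fun p => t y p = x)).card = (A x).card := by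
  classical
  intro x
  have e1 : ((y : V) × {p : {p // p ∈ A y} // t y p.1 = x}) ≃
      {z : (y : V) × {p // p ∈ A y} // t z.1 z.2.1 = x} :=
    { toFun := fun z => ⟨⟨z.1, z.2.1⟩, z.2.2⟩
      invFun := fun z => ⟨z.1.1, z.1.2, z.2⟩
      left_inv := fun z => rfl
      right_inv := fun z => rfl }
  have e2 : {z : (y : V) × {p // p ∈ A y} // t z.1 z.2.1 = x} ≃
      {w : (x' : V) × {p // p ∈ B x'} // w.1 = x} := by
    refine e.subtypeEquiv fun z => ?_
    rw [he z]
  have e3 : {w : (x' : V) × {p // p ∈ B x'} // w.1 = x} ≃ {p // p ∈ B x} :=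
    { toFun := fun w => w.2 ▸ w.1.2
      invFun := fun p => ⟨⟨x, p⟩, rfl⟩
      left_inv := fun w => by
        obtain ⟨⟨x', p⟩, h⟩ := w
        subst h
        rfl
      right_inv := fun p => rfl }
  have key : Fintype.card ((y : V) × {p : {p // p ∈ A y} // t y p.1 = x}) =
      Fintype.card {p // p ∈ B x} := Fintype.card_congr ((e1.trans e2).trans e3)
  have hsum : ∀ y : V, ((A y).filter (fun p => t y p = x)).card =
      Fintype.card {p : {p // p ∈ A y} // t y p.1 = x} := by
    intro y
    rw [← Fintype.card_coe]
    apply Fintype.card_congr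
    exact
      { toFun := fun p => ⟨⟨p.1, (Finset.mem_filter.mp p.2).1⟩,
          (Finset.mem_filter.mp p.2).2⟩
        invFun := fun p => ⟨p.1.1, Finset.mem_filter.mpr ⟨p.1.2, p.2⟩⟩
        left_inv := fun p => rfl
        right_inv := fun p => rfl }
  calc ∑ y : V, ((A y).filter (fun p => t y p = x)).card
      = ∑ y : V, Fintype.card {p : {p // p ∈ A y} // t y p.1 = x} := by
        simp_rw [hsum]
    _ = Fintype.card ((y : V) × {p : {p // p ∈ A y} // t y p.1 = x}) :=
        Fintype.card_sigma.symm
    _ = Fintype.card {p // p ∈ B x} := key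
    _ = (B x).card := Fintype.card_coe _
    _ = (A x).card := (hcard x).symm
end

section
/- For a,b,c,i,j,k ∈ ℤ_{≥0}, the matrix element ⟨c| δ_{a+b,i+j} θ(a ≥ j) (a⁺)^j k^{θ(a>j)} (a⁻)^b |k⟩ equals δ_{a, j+(i-k)_+} · δ_{b, min(i,k)} · δ_{c, j+(k-i)_+}, where a⁺, a⁻, k are the q=0 oscillators, θ(P) = 1 if P is true and 0 otherwise, and (x)_+ = max(x,0). -/
noncomputable def aPlus : Module.End ℂ (ℕ →₀ ℂ) :=
  Finsupp.lsum ℂ fun m => Finsupp.lsingle (m + 1)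

noncomputable def aMinus : Module.End ℂ (ℕ →₀ ℂ) :=
  Finsupp.lsum ℂ fun m => if m = 0 then 0 else Finsupp.lsingle (m - 1)

noncomputable def kOsc : Module.End ℂ (ℕ →₀ ℂ) :=
  Finsupp.lsum ℂ fun m => if m = 0 then Finsupp.lsingle 0 else 0

lemma aPlus_single (m : ℕ) : aPlus (Finsupp.single m (1:ℂ)) = Finsupp.single (m+1) 1 := by
  simp [aPlus]

lemma aMinus_single (m : ℕ) :
    aMinus (Finsupp.single m (1:ℂ)) = if m = 0 then 0 else Finsupp.single (m-1) 1 := by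
  simp [aMinus]; split <;> simp

lemma kOsc_single (m : ℕ) :
    kOsc (Finsupp.single m (1:ℂ)) = if m = 0 then Finsupp.single 0 1 else 0 := by
  simp [kOsc]; split <;> simp

lemma aPlus_pow_single (j m : ℕ) :
    (aPlus ^ j) (Finsupp.single m (1:ℂ)) = Finsupp.single (m+j) 1 := by
  induction j with
  | zero => simp
  | succ n ih => rw [pow_succ', Module.End.mul_apply, ih, aPlus_single, ← add_assoc]

lemma aMinus_pow_single (b m : ℕ) :
    (aMinus ^ b) (Finsupp.single m (1:ℂ)) =
      if b ≤ m then Finsupp.single (m-b) 1 else 0 := by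
  induction b generalizing m with
  | zero => simp
  | succ n ih =>
    rw [pow_succ, Module.End.mul_apply, aMinus_single]
    split
    · subst m; simp [Nat.succ_le_iff]
    · rw [ih]
      rcases Nat.lt_or_ge m (n+1) with h | h
      · rw [if_neg (by omega), if_neg (by omega)]
      · rw [if_pos (by omega), if_pos h]
        congr 1; omega
/-- For a,b,c,i,j,k ∈ ℤ_{≥0},
⟨c| δ_{a+b,i+j} θ(a ≥ j) (a⁺)^j k^{θ(a>j)} (a⁻)^b |k⟩
  = δ_{a, j+(i-k)₊} δ_{b, min(i,k)} δ_{c, j+(k-i)₊}.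
(For natural numbers, truncated subtraction i - k equals (i-k)₊.) -/
theorem q0_R_matrix_element (a b c i j k : ℕ) :
    ((if a + b = i + j then (1 : ℂ) else 0) •
      ((if j ≤ a then (1 : ℂ) else 0) •
        ((aPlus ^ j * kOsc ^ (if j < a then 1 else 0) * aMinus ^ b)
          (Finsupp.single k 1)))) c
    = if a = j + (i - k) ∧ b = min i k ∧ c = j + (k - i) then 1 else 0 := by
  rw [Module.End.mul_apply, Module.End.mul_apply, aMinus_pow_single]
  by_cases hb : b ≤ k
  · rw [if_pos hb]
    by_cases hja : j ≤ a
    · rw [if_pos hja]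
      by_cases hlt : j < a
      · rw [if_pos hlt, pow_one, kOsc_single]
        by_cases hkb : k - b = 0
        · rw [if_pos hkb, aPlus_pow_single, zero_add]
          simp only [Finsupp.smul_apply, Finsupp.single_apply, smul_ite, smul_zero, smul_eq_mul,
            mul_one]
          split_ifs <;> first | (exfalso; omega) | norm_num
        · rw [if_neg hkb]
          simp only [map_zero, smul_zero, Finsupp.coe_zero, Pi.zero_apply]
          rw [eq_comm, if_neg]
          rintro ⟨h1, h2, h3⟩; omega
      · rw [if_neg hlt, pow_zero, Module.End.one_apply, aPlus_pow_single]
        simp only [Finsupp.smul_apply, Finsupp.single_apply, smul_ite, smul_zero, smul_eq_mul,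
          mul_one]
        split_ifs <;> first | (exfalso; omega) | norm_num
    · rw [if_neg hja]
      simp only [zero_smul, smul_zero, Finsupp.coe_zero, Pi.zero_apply]
      rw [eq_comm, if_neg]
      rintro ⟨h1, h2, h3⟩; omega
  · rw [if_neg hb]
    simp only [map_zero, smul_zero, Finsupp.coe_zero, Pi.zero_apply]
    rw [eq_comm, if_neg]
    rintro ⟨h1, h2, h3⟩; omega
end

section
/- Fix L ≥ 1 and nonnegative integers i₁,...,i_L, j₁,...,j_L with Σ_r i_r > Σ_r j_r. Then the system of equations c_{r-1} = j_r + (c_r - i_r)_+ for r ∈ [1,L], together with the cyclic condition c₀ = c_L, has a unique solution (c₁,...,c_L) ∈ (ℤ_{≥0})^L. -/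
namespace UniqueCyclic

open Fin.NatCast

def stepFn (j i x : ℕ) : ℕ := j + (x - i)

def iterFn (L : ℕ) [NeZero L] (i j : Fin L → ℕ) : ℕ → ℕ → ℕ
  | 0, x => x
  | k+1, x => stepFn (j (-(k : Fin L))) (i (-(k : Fin L))) (iterFn L i j k x)

variable (L : ℕ) [NeZero L] (i j : Fin L → ℕ)

lemma iter_mono {a b : ℕ} (h : a ≤ b) : ∀ k : ℕ, iterFn L i j k a ≤ iterFn L i j k b := by
  intro k; induction k with
  | zero => exact h
  | succ k ih => simp only [iterFn, stepFn]; omega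

lemma iter_prop {a b d : ℕ} : ∀ t m : ℕ, iterFn L i j m b ≤ iterFn L i j m a + d →
    iterFn L i j (m + t) b ≤ iterFn L i j (m + t) a + d := by
  intro t; induction t with
  | zero => intro m h; exact h
  | succ t ih =>
    intro m h
    have h2 := ih m h
    show iterFn L i j ((m + t) + 1) b ≤ iterFn L i j ((m + t) + 1) a + d
    simp only [iterFn, stepFn]
    omega

lemma iter_exact {x : ℕ} : ∀ k : ℕ, (∀ m : ℕ, m < k → i (-(m : Fin L)) ≤ iterFn L i j m x) →
    iterFn L i j k x + ∑ m ∈ Finset.range k, i (-(m : Fin L)) =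
      x + ∑ m ∈ Finset.range k, j (-(m : Fin L)) := by
  intro k; induction k with
  | zero => simp [iterFn]
  | succ k ih =>
    intro h
    have h1 := ih (fun m hm => h m (Nat.lt_succ_of_lt hm))
    have h2 := h k (Nat.lt_succ_self k)
    rw [Finset.sum_range_succ, Finset.sum_range_succ]
    simp only [iterFn, stepFn] at *
    omega

lemma sum_neg (f : Fin L → ℕ) :
    ∑ m ∈ Finset.range L, f (-(m : Fin L)) = ∑ r, f r := by
  rw [← Fin.sum_univ_eq_sum_range (fun m => f (-(m : Fin L))) L]
  simp only [Fin.cast_val_eq_self]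
  exact Fintype.sum_equiv (Equiv.neg (Fin L)) _ _ (fun m => rfl)

lemma big_ge (x : ℕ) (hx : ∑ r, i r ≤ x) :
    ∀ m : ℕ, m < L → i (-(m : Fin L)) ≤ iterFn L i j m x := by
  intro m
  induction m using Nat.strong_induction_on with
  | _ m ih =>
    intro hm
    have h1 := iter_exact L i j m (fun m' hm' => ih m' hm' (lt_trans hm' hm))
    have h2 : ∑ m' ∈ Finset.range (m+1), i (-(m' : Fin L)) ≤ ∑ r, i r := by
      rw [← sum_neg L i]
      exact Finset.sum_le_sum_of_subset (Finset.range_subset_range.2 hm)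
    rw [Finset.sum_range_succ] at h2
    omega

lemma exists_fixed (h : ∑ r, j r < ∑ r, i r) : ∃ x, iterFn L i j L x = x := by
  have hP : ∃ x, iterFn L i j L x ≤ x := by
    refine ⟨∑ r, i r, ?_⟩
    have h1 := iter_exact L i j L (big_ge L i j _ le_rfl)
    rw [sum_neg, sum_neg] at h1
    omega
  classical
  refine ⟨Nat.find hP, le_antisymm (Nat.find_spec hP) ?_⟩
  rcases Nat.eq_zero_or_pos (Nat.find hP) with h0 | h0
  · rw [h0]; exact Nat.zero_le _
  · have hlt : ¬ iterFn L i j L (Nat.find hP - 1) ≤ Nat.find hP - 1 :=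
      Nat.find_min hP (by omega)
    have hm := iter_mono L i j (show Nat.find hP - 1 ≤ Nat.find hP by omega) L
    omega

lemma fixed_le (h : ∑ r, j r < ∑ r, i r) {x y : ℕ} (hxy : x ≤ y)
    (hx : iterFn L i j L x = x) (hy : iterFn L i j L y = y) : y ≤ x := by
  by_contra hlt
  push_neg at hlt
  by_cases hcase : ∀ m : ℕ, m < L → i (-(m : Fin L)) ≤ iterFn L i j m x
  · have h1 := iter_exact L i j L hcase
    rw [sum_neg, sum_neg] at h1
    omega
  · push_neg at hcase
    obtain ⟨m, hm, hmi⟩ := hcase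
    have hlip : iterFn L i j m y ≤ iterFn L i j m x + (y - x) := by
      have h0 : iterFn L i j 0 y ≤ iterFn L i j 0 x + (y - x) := by
        simp only [iterFn]; omega
      have := iter_prop L i j m 0 h0
      simpa using this
    have hstep : iterFn L i j (m+1) y ≤ iterFn L i j (m+1) x + (y - x - 1) := by
      simp only [iterFn, stepFn]
      omega
    have hend := iter_prop L i j (L - (m+1)) (m+1) hstep
    have hmeq : m + 1 + (L - (m+1)) = L := by omega
    rw [hmeq] at hend
    omega

lemma fixed_unique (h : ∑ r, j r < ∑ r, i r) {x y : ℕ}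
    (hx : iterFn L i j L x = x) (hy : iterFn L i j L y = y) : x = y := by
  rcases le_total x y with hle | hle
  · exact le_antisymm hle (fixed_le L i j h hle hx hy)
  · exact (le_antisymm hle (fixed_le L i j h hle hy hx)).symm

end UniqueCyclic

open UniqueCyclic Fin.NatCast in
/-- For L ≥ 1 and nonnegative integers i_r, j_r with
Σ i_r > Σ j_r, the cyclic system c_{r-1} = j_r + (c_r - i_r)₊, r ∈ ℤ_L,
has a unique solution in nonnegative integers.  (Indices are cyclic, modeled
by Fin L; truncated ℕ-subtraction realizes the positive part.) -/
theorem unique_cyclic_solution (L : ℕ) [NeZero L] (i j : Fin L → ℕ)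
    (h : ∑ r, j r < ∑ r, i r) :
    ∃! c : Fin L → ℕ, ∀ r : Fin L, c (r - 1) = j r + (c r - i r) := by
  obtain ⟨x0, hx0⟩ := exists_fixed L i j h
  refine ⟨fun s => iterFn L i j ((-s).val) x0, ?_, ?_⟩
  · intro r
    show iterFn L i j ((-(r-1)).val) x0 = j r + (iterFn L i j ((-r).val) x0 - i r)
    set k := (-r).val with hk
    have hcast : ((k : ℕ) : Fin L) = -r := Fin.cast_val_eq_self (-r)
    have hsucc : iterFn L i j (k+1) x0 = j r + (iterFn L i j k x0 - i r) := by
      show stepFn (j (-(k : Fin L))) (i (-(k : Fin L))) (iterFn L i j k x0) = _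
      rw [hcast, neg_neg, stepFn]
    have hidx : (-(r - 1)).val = (k + 1) % L := by
      have hre : -(r - 1) = (k : Fin L) + 1 := by rw [hcast]; abel
      rw [hre, Fin.val_add, hcast, Fin.val_one']
      conv_rhs => rw [Nat.add_mod]
      rw [Nat.mod_eq_of_lt (show (-r).val < L from (-r).isLt)]
    rw [hidx]
    rcases Nat.lt_or_ge (k+1) L with hlt2 | hge
    · rw [Nat.mod_eq_of_lt hlt2, hsucc]
    · have hL : k + 1 = L := by have := (-r).isLt; omega
      rw [hL, Nat.mod_self]
      show x0 = j r + (iterFn L i j k x0 - i r)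
      rw [← hsucc, hL, hx0]
  · intro c hc
    funext s
    have key : ∀ k : ℕ, iterFn L i j k (c 0) = c (-(k : Fin L)) := by
      intro k; induction k with
      | zero => simp [iterFn]
      | succ k ih =>
        show stepFn (j (-(k : Fin L))) (i (-(k : Fin L))) (iterFn L i j k (c 0)) = _
        rw [stepFn, ih, ← hc (-(k : Fin L))]
        congr 1
        push_cast
        abel
    have hfix : iterFn L i j L (c 0) = c 0 := by
      rw [key L, Fin.natCast_self, neg_zero]
    have hx : c 0 = x0 := fixed_unique L i j h hfix hx0
    have hs := key ((-s).val)
    rw [Fin.cast_val_eq_self, neg_neg] at hs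
    show c s = iterFn L i j ((-s).val) x0
    rw [← hs, hx]
end
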